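/- Let n ≥ 2 and let f : ℂⁿ → ℂⁿ preserve unit distance with f(X) = X for every X ∈ ℝⁿ. Then for each X ∈ ℂⁿ \ ℝⁿ: if f((i,...,i)) = (i,...,i) then f(X) = X, and if f((i,...,i)) = (−i,...,−i) then f(X) = (τ,...,τ)(X). -/

import Mathlib

/-- φ_n(X,Y) = Σ_{i=1}^n (x_i − y_i)². -/
noncomputable def phi (n : ℕ) (X Y : Fin n → ℂ) : ℂ := ∑ i, (X i - Y i) ^ 2

namespace S7
variable {n : ℕ}

def ip (u v : Fin n → ℝ) : ℝ := ∑ i, u i * v i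
def mk (A B : Fin n → ℝ) : Fin n → ℂ := fun i => ⟨A i, B i⟩
def reV (X : Fin n → ℂ) : Fin n → ℝ := fun i => (X i).re
def imV (X : Fin n → ℂ) : Fin n → ℝ := fun i => (X i).im

lemma ip_comm (u v : Fin n → ℝ) : ip u v = ip v u := by simp [ip, mul_comm]
lemma ip_sub_left (u w v : Fin n → ℝ) : ip (u - w) v = ip u v - ip w v := by
  simp [ip, sub_mul, Finset.sum_sub_distrib]
lemma ip_add_left (u w v : Fin n → ℝ) : ip (u + w) v = ip u v + ip w v := by
  simp [ip, add_mul, Finset.sum_add_distrib]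
lemma ip_sub_right (u v w : Fin n → ℝ) : ip u (v - w) = ip u v - ip u w := by
  simp [ip, mul_sub, Finset.sum_sub_distrib]
lemma ip_add_right (u v w : Fin n → ℝ) : ip u (v + w) = ip u v + ip u w := by
  simp [ip, mul_add, Finset.sum_add_distrib]
lemma ip_smul_left (c : ℝ) (u v : Fin n → ℝ) : ip (c • u) v = c * ip u v := by
  simp [ip, Finset.mul_sum, mul_assoc]
lemma ip_smul_right (c : ℝ) (u v : Fin n → ℝ) : ip u (c • v) = c * ip u v := by
  rw [ip_comm, ip_smul_left, ip_comm]
lemma ip_zero_right (u : Fin n → ℝ) : ip u 0 = 0 := by simp [ip]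
lemma ip_zero_left (u : Fin n → ℝ) : ip 0 u = 0 := by simp [ip]
lemma ip_self_nonneg (v : Fin n → ℝ) : 0 ≤ ip v v :=
  Finset.sum_nonneg fun i _ => mul_self_nonneg _
lemma ip_self_eq_zero {v : Fin n → ℝ} (h : ip v v = 0) : v = 0 := by
  funext i
  have h2 := (Finset.sum_eq_zero_iff_of_nonneg (fun i _ => mul_self_nonneg (v i))).1 h i
    (Finset.mem_univ i)
  simpa [mul_self_eq_zero] using h2
lemma ip_self_pos {v : Fin n → ℝ} (h : v ≠ 0) : 0 < ip v v := by
  rcases lt_or_eq_of_le (ip_self_nonneg v) with h' | h'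
  · exact h'
  · exact absurd (ip_self_eq_zero h'.symm) h

lemma ip_single (B : Fin n → ℝ) (j : Fin n) : ip (Pi.single j 1) B = B j := by
  simp [ip, Pi.single_apply, ite_mul]

lemma exists_perp (hn : 2 ≤ n) (B : Fin n → ℝ) : ∃ v : Fin n → ℝ, v ≠ 0 ∧ ip v B = 0 := by
  set i0 : Fin n := ⟨0, by omega⟩ with hi0
  set i1 : Fin n := ⟨1, by omega⟩ with hi1
  have h01 : i0 ≠ i1 := by simp [hi0, hi1, Fin.ext_iff]
  by_cases h0 : B i0 = 0
  · refine ⟨Pi.single i0 1, ?_, ?_⟩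
    · intro h
      have := congrFun h i0
      simp at this
    · rw [ip_single]; exact h0
  · refine ⟨(B i1 • (Pi.single i0 1 : Fin n → ℝ) - B i0 • (Pi.single i1 1 : Fin n → ℝ)), ?_, ?_⟩
    · intro h
      have := congrFun h i1
      simp [Pi.single_apply, h01, Ne.symm h01] at this
      exact h0 this
    · rw [ip_sub_left, ip_smul_left, ip_smul_left, ip_single, ip_single]; ring

lemma phi_re (X Y : Fin n → ℂ) :
    (phi n X Y).re = ip (reV X - reV Y) (reV X - reV Y) - ip (imV X - imV Y) (imV X - imV Y) := by
  simp only [phi, Complex.re_sum, pow_two, Complex.mul_re, Complex.sub_re, Complex.sub_im,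
    ip, reV, imV, Pi.sub_apply, Finset.sum_sub_distrib]

lemma phi_im (X Y : Fin n → ℂ) :
    (phi n X Y).im = 2 * ip (reV X - reV Y) (imV X - imV Y) := by
  simp only [phi, Complex.im_sum, pow_two, Complex.mul_im, Complex.sub_re, Complex.sub_im,
    ip, reV, imV, Pi.sub_apply, Finset.mul_sum]
  exact Finset.sum_congr rfl fun i _ => by ring

lemma phi_eq_one_iff (X Y : Fin n → ℂ) :
    phi n X Y = 1 ↔
      ip (reV X - reV Y) (reV X - reV Y) - ip (imV X - imV Y) (imV X - imV Y) = 1 ∧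
      ip (reV X - reV Y) (imV X - imV Y) = 0 := by
  rw [Complex.ext_iff, phi_re, phi_im]
  constructor
  · rintro ⟨h1, h2⟩
    exact ⟨by simpa using h1, by simpa using h2⟩
  · rintro ⟨h1, h2⟩
    simp [h1, h2]

lemma ip_expand (u v : Fin n → ℝ) (c : ℝ) :
    ip (u - c • v) (u - c • v) = ip u u - 2*c*ip u v + c^2 * ip v v := by
  simp only [ip_sub_left, ip_sub_right, ip_smul_left, ip_smul_right]
  rw [ip_comm v u]; ring

lemma mk_reV_imV (X : Fin n → ℂ) : mk (reV X) (imV X) = X := rfl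
lemma reV_mk (A B : Fin n → ℝ) : reV (mk A B) = A := rfl
lemma imV_mk (A B : Fin n → ℝ) : imV (mk A B) = B := rfl


set_option maxHeartbeats 1000000 in
lemma fix_or_conj (hn : 2 ≤ n) (f : (Fin n → ℂ) → (Fin n → ℂ))
    (hf : ∀ X Y : Fin n → ℂ, phi n X Y = 1 ^ 2 → phi n (f X) (f Y) = 1 ^ 2)
    (hreal : ∀ X : Fin n → ℂ, (∀ i, (X i).im = 0) → f X = X)
    (X : Fin n → ℂ) (hX : imV X ≠ 0) :
    f X = X ∨ f X = fun i => (starRingEnd ℂ) (X i) := by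
  set A : Fin n → ℝ := reV X with hA
  set B : Fin n → ℝ := imV X with hB
  set A' : Fin n → ℝ := reV (f X) with hA'
  set B' : Fin n → ℝ := imV (f X) with hB'
  set u : Fin n → ℝ := A' - A with hu
  clear_value u A B A' B'
  have hBpos : 0 < ip B B := ip_self_pos hX
  have G : ∀ v : Fin n → ℝ, ip v B = 0 → ∀ c : ℝ, c^2 * ip v v = 1 + ip B B →
      (ip u u - 2*c*ip u v + c^2 * ip v v - ip B' B' = 1 ∧ ip u B' - c * ip v B' = 0) := by
    intro v hvB c hc2
    set P : Fin n → ℝ := A + c • v with hP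
    have h1 : phi n X (mk P 0) = 1 ^ 2 := by
      rw [one_pow, phi_eq_one_iff, reV_mk, imV_mk, ← hA, ← hB, sub_zero]
      have hre : A - P = (0 : Fin n → ℝ) - c • v := by
        rw [hP]; abel
      rw [hre, ip_expand, ip_sub_left, ip_smul_left]
      simp only [ip_zero_left]
      constructor
      · linarith [hc2]
      · rw [hvB]; ring
    have hfP : f (mk P 0) = mk P 0 := hreal _ (fun i => rfl)
    have h2 := hf X (mk P 0) h1
    rw [hfP, one_pow, phi_eq_one_iff, reV_mk, imV_mk, ← hA', ← hB', sub_zero] at h2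
    have hre : A' - P = u - c • v := by
      rw [hP, hu]; abel
    rw [hre, ip_expand, ip_sub_left, ip_smul_left] at h2
    exact h2
  have key : ∀ v : Fin n → ℝ, v ≠ 0 → ip v B = 0 →
      ip v B' = 0 ∧ ip u v = 0 ∧ ip u B' = 0 ∧ ip u u + ip B B = ip B' B' := by
    intro v hv hvB
    have hs : 0 < ip v v := ip_self_pos hv
    set t : ℝ := Real.sqrt ((1 + ip B B) / ip v v) with htdef
    have hnum : (0:ℝ) < 1 + ip B B := by nlinarith [ip_self_nonneg B]
    have ht2 : t ^ 2 = (1 + ip B B) / ip v v := by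
      rw [htdef, Real.sq_sqrt (by positivity)]
    have ht2' : t ^ 2 * ip v v = 1 + ip B B := by
      rw [ht2]; field_simp
    have ht0 : 0 < t := by
      rw [htdef]; positivity
    obtain ⟨e1, e2⟩ := G v hvB t ht2'
    obtain ⟨e3, e4⟩ := G v hvB (-t) (by rw [neg_pow]; simpa using ht2')
    have hvB' : ip v B' = 0 := by nlinarith
    have huB' : ip u B' = 0 := by nlinarith
    have huv : ip u v = 0 := by nlinarith
    refine ⟨hvB', huv, huB', by nlinarith⟩
  -- B' is a multiple of B
  have hBmul : B' = (ip B B' / ip B B) • B := by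
    set c1 : ℝ := ip B B' / ip B B with hc1
    set v1 : Fin n → ℝ := B' - c1 • B with hv1
    have hv1B : ip v1 B = 0 := by
      rw [hv1, ip_sub_left, ip_smul_left, hc1, ip_comm B' B]
      field_simp
      ring
    by_cases h : v1 = 0
    · rw [hv1] at h
      exact (sub_eq_zero.1 h)
    · obtain ⟨hvB', -, -, -⟩ := key v1 h hv1B
      have hz : ip v1 v1 = 0 := by
        have e : ip v1 v1 = ip v1 B' - c1 * ip v1 B := by
          rw [hv1, ip_sub_right, ip_smul_right]
        rw [e, hvB', hv1B]
        ring
      exact absurd (ip_self_eq_zero hz) h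
  -- u is a multiple of B
  have humul : u = (ip u B / ip B B) • B := by
    set c2 : ℝ := ip u B / ip B B with hc2
    set v2 : Fin n → ℝ := u - c2 • B with hv2
    have hv2B : ip v2 B = 0 := by
      rw [hv2, ip_sub_left, ip_smul_left, hc2]
      field_simp
      ring
    by_cases h : v2 = 0
    · rw [hv2] at h
      exact (sub_eq_zero.1 h)
    · obtain ⟨-, huv2, -, -⟩ := key v2 h hv2B
      have hz : ip v2 v2 = 0 := by
        have e := ip_sub_left u (c2 • B) v2
        rw [ip_smul_left, ← hv2] at e
        rw [e, huv2, ip_comm B v2, hv2B]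
        ring
      exact absurd (ip_self_eq_zero hz) h
  obtain ⟨v0, hv0, hv0B⟩ := exists_perp hn B
  obtain ⟨-, -, huB', hnorm⟩ := key v0 hv0 hv0B
  set c1 : ℝ := ip B B' / ip B B with hc1d
  set c2 : ℝ := ip u B / ip B B with hc2d
  clear_value c1 c2
  have hip : ip u B' = c2 * (c1 * ip B B) := by
    conv_lhs => rw [humul, hBmul]
    rw [ip_smul_left, ip_smul_right]
  have h0 : c2 * (c1 * ip B B) = 0 := by rw [← hip]; exact huB'
  have hc1c2 : c2 = 0 ∨ c1 = 0 := by
    rcases mul_eq_zero.1 h0 with h | h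
    · exact Or.inl h
    · rcases mul_eq_zero.1 h with h' | h'
      · exact Or.inr h'
      · exact absurd h' (ne_of_gt hBpos)
  have e1 : ip u u = c2 ^ 2 * ip B B := by
    conv_lhs => rw [humul]
    rw [ip_smul_left, ip_smul_right]
    ring
  have e2 : ip B' B' = c1 ^ 2 * ip B B := by
    conv_lhs => rw [hBmul]
    rw [ip_smul_left, ip_smul_right]
    ring
  have hscal : c2 ^ 2 + 1 = c1 ^ 2 := by
    rw [e1, e2] at hnorm
    have h' : (c2 ^ 2 + 1) * ip B B = c1 ^ 2 * ip B B := by linarith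
    exact mul_right_cancel₀ (ne_of_gt hBpos) h'
  have hc2z : c2 = 0 := by
    rcases hc1c2 with h | h
    · exact h
    · exfalso
      rw [h] at hscal
      nlinarith
  have hAeq : A' = A := by
    have hu0 : u = 0 := by rw [humul, hc2z, zero_smul]
    rw [hu] at hu0
    exact sub_eq_zero.1 hu0
  have hc1sq : c1 ^ 2 = 1 := by rw [← hscal, hc2z]; norm_num
  have hfactor : (c1 - 1) * (c1 + 1) = 0 := by nlinarith [hc1sq]
  have hfx : f X = mk A' B' := by rw [hA', hB', mk_reV_imV]
  rcases mul_eq_zero.1 hfactor with h | h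
  · left
    have hBeq : B' = B := by
      rw [hBmul, sub_eq_zero.1 h, one_smul]
    rw [hfx, hAeq, hBeq, hA, hB, mk_reV_imV]
  · right
    have hBeq : B' = -B := by
      have hc1 : c1 = -1 := by linarith
      rw [hBmul, hc1, neg_smul, one_smul]
    rw [hfx, hAeq, hBeq, hA, hB]
    funext i
    apply Complex.ext
    · simp [mk, reV]
    · simp [mk, imV]

lemma phi_conj (X Y : Fin n → ℂ) :
    phi n (fun i => (starRingEnd ℂ) (X i)) (fun i => (starRingEnd ℂ) (Y i)) =
      (starRingEnd ℂ) (phi n X Y) := by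
  simp only [phi, map_sum, map_pow, map_sub]

lemma imV_ne_zero_iff (X : Fin n → ℂ) : imV X ≠ 0 ↔ ¬ ∀ i, (X i).im = 0 := by
  constructor
  · intro h h'
    exact h (funext h')
  · intro h h'
    exact h fun i => congrFun h' i

lemma propagate (hn : 2 ≤ n) (f : (Fin n → ℂ) → (Fin n → ℂ))
    (hf : ∀ X Y : Fin n → ℂ, phi n X Y = 1 ^ 2 → phi n (f X) (f Y) = 1 ^ 2)
    (hreal : ∀ X : Fin n → ℂ, (∀ i, (X i).im = 0) → f X = X)
    (Z W : Fin n → ℂ) (hfZ : f Z = Z)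
    (h1 : phi n Z W = 1) (h2 : phi n Z (fun i => (starRingEnd ℂ) (W i)) ≠ 1) :
    f W = W := by
  by_cases hW : imV W = 0
  · exact hreal W fun i => congrFun hW i
  · rcases fix_or_conj hn f hf hreal W hW with h | h
    · exact h
    · exfalso
      have h3 := hf Z W (by rw [one_pow]; exact h1)
      rw [hfZ, h, one_pow] at h3
      exact h2 h3

lemma ip_one_one : ip (1 : Fin n → ℝ) 1 = n := by simp [ip]

lemma one_fun_ne_zero (hn : 2 ≤ n) : (1 : Fin n → ℝ) ≠ 0 := by
  intro h
  have := congrFun h ⟨0, by omega⟩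
  simp at this

lemma reV_conj (X : Fin n → ℂ) : reV (fun i => (starRingEnd ℂ) (X i)) = reV X := rfl

lemma imV_conj (X : Fin n → ℂ) : imV (fun i => (starRingEnd ℂ) (X i)) = -imV X := rfl

lemma ip_neg_neg (x : Fin n → ℝ) : ip (-x) (-x) = ip x x := by simp [ip]

-- one unit step within the slice Im = (1,...,1)
lemma step_one (hn : 2 ≤ n) (f : (Fin n → ℂ) → (Fin n → ℂ))
    (hf : ∀ X Y : Fin n → ℂ, phi n X Y = 1 ^ 2 → phi n (f X) (f Y) = 1 ^ 2)
    (hreal : ∀ X : Fin n → ℂ, (∀ i, (X i).im = 0) → f X = X)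
    (A A' : Fin n → ℝ) (hd : ip (A - A') (A - A') = 1)
    (hfix : f (mk A 1) = mk A 1) : f (mk A' 1) = mk A' 1 := by
  apply propagate hn f hf hreal (mk A 1) (mk A' 1) hfix
  · rw [phi_eq_one_iff, reV_mk, reV_mk, imV_mk, imV_mk, sub_self]
    rw [ip_zero_left, ip_zero_right, hd]
    norm_num
  · intro h
    have hconj : (fun i => (starRingEnd ℂ) (mk A' 1 i)) = mk A' (-1) := by
      funext i
      apply Complex.ext <;> simp [mk]
    rw [hconj, phi_eq_one_iff, reV_mk, reV_mk, imV_mk, imV_mk] at h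
    obtain ⟨hre, -⟩ := h
    have e : ip ((1 : Fin n → ℝ) - (-1)) (1 - (-1)) = 4 * n := by
      have : ((1 : Fin n → ℝ) - (-1)) = fun _ => (2:ℝ) := by
        funext i; simp; norm_num
      rw [this]
      simp [ip]
      ring
    rw [e, hd] at hre
    have hn' : (2:ℝ) ≤ n := by exact_mod_cast hn
    nlinarith


-- two unit steps cover any distance ≤ 2 within the slice Im = (1,...,1)
lemma two_step (hn : 2 ≤ n) (f : (Fin n → ℂ) → (Fin n → ℂ))
    (hf : ∀ X Y : Fin n → ℂ, phi n X Y = 1 ^ 2 → phi n (f X) (f Y) = 1 ^ 2)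
    (hreal : ∀ X : Fin n → ℂ, (∀ i, (X i).im = 0) → f X = X)
    (A A' : Fin n → ℝ) (hd : ip (A - A') (A - A') ≤ 4)
    (hfix : f (mk A 1) = mk A 1) : f (mk A' 1) = mk A' 1 := by
  by_cases heq : A = A'
  · rw [← heq]; exact hfix
  have hd0 : 0 < ip (A - A') (A - A') := ip_self_pos (sub_ne_zero.2 heq)
  obtain ⟨v, hv0, hvperp⟩ := exists_perp hn (A - A')
  have hvpos : 0 < ip v v := ip_self_pos hv0
  set t : ℝ := Real.sqrt ((1 - ip (A - A') (A - A') / 4) / ip v v) with htdef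
  have ht2 : t ^ 2 * ip v v = 1 - ip (A - A') (A - A') / 4 := by
    rw [htdef, Real.sq_sqrt (div_nonneg (by linarith) (le_of_lt hvpos))]
    field_simp
  set M : Fin n → ℝ := (2:ℝ)⁻¹ • (A + A') + t • v with hM
  have hAM : ip (A - M) (A - M) = 1 := by
    have e : A - M = (2:ℝ)⁻¹ • (A - A') - t • v := by
      rw [hM]
      funext i
      simp only [Pi.sub_apply, Pi.add_apply, Pi.smul_apply, smul_eq_mul]
      ring
    rw [e, ip_expand]
    simp only [ip_smul_left, ip_smul_right]
    rw [ip_comm (A - A') v, hvperp]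
    nlinarith [ht2]
  have hMA' : ip (M - A') (M - A') = 1 := by
    have e' : M - A' = (2:ℝ)⁻¹ • (A - A') - (-t) • v := by
      rw [hM]
      funext i
      simp only [Pi.sub_apply, Pi.add_apply, Pi.smul_apply, smul_eq_mul]
      ring
    rw [e', ip_expand]
    simp only [ip_smul_left, ip_smul_right]
    rw [ip_comm (A - A') v, hvperp]
    nlinarith [ht2]
  have hMfix : f (mk M 1) = mk M 1 := step_one hn f hf hreal A M hAM hfix
  exact step_one hn f hf hreal M A' hMA' hMfix

lemma all_one_fixed (hn : 2 ≤ n) (f : (Fin n → ℂ) → (Fin n → ℂ))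
    (hf : ∀ X Y : Fin n → ℂ, phi n X Y = 1 ^ 2 → phi n (f X) (f Y) = 1 ^ 2)
    (hreal : ∀ X : Fin n → ℂ, (∀ i, (X i).im = 0) → f X = X)
    (h0 : f (mk (0 : Fin n → ℝ) 1) = mk 0 1) :
    ∀ A : Fin n → ℝ, f (mk A 1) = mk A 1 := by
  have claim : ∀ k : ℕ, ∀ A : Fin n → ℝ, ip A A ≤ 4 * (k:ℝ)^2 → f (mk A 1) = mk A 1 := by
    intro k
    induction k with
    | zero =>
      intro A hA
      have hz : A = 0 := ip_self_eq_zero (le_antisymm (by simpa using hA) (ip_self_nonneg A))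
      rw [hz]; exact h0
    | succ k ih =>
      intro A hA
      by_cases h : ip A A ≤ 4 * (k:ℝ)^2
      · exact ih A h
      push_neg at h
      have hApos : 0 < ip A A := lt_of_le_of_lt (by positivity) h
      set r : ℝ := Real.sqrt (ip A A) with hrdef
      have hr2 : r ^ 2 = ip A A := Real.sq_sqrt (le_of_lt hApos)
      have hrpos : 0 < r := Real.sqrt_pos.2 hApos
      have hk0 : (0:ℝ) ≤ (k:ℝ) := Nat.cast_nonneg k
      have hrlow : 2 * (k:ℝ) < r := by
        by_contra hle
        push_neg at hle
        nlinarith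
      have hrhigh : r ≤ 2 * ((k:ℝ) + 1) := by
        push_cast at hA
        by_contra hle
        push_neg at hle
        nlinarith
      set c : ℝ := 2 * (k:ℝ) / r with hcdef
      set A'' : Fin n → ℝ := c • A with hA''
      have hnormA'' : ip A'' A'' = 4 * (k:ℝ)^2 := by
        rw [hA'', ip_smul_left, ip_smul_right, ← hr2, hcdef]
        field_simp
        ring
      have hfixA'' : f (mk A'' 1) = mk A'' 1 := ih A'' (le_of_eq hnormA'')
      apply two_step hn f hf hreal A'' A ?_ hfixA''
      have e : A'' - A = (c - 1) • A := by
        rw [hA'', sub_smul, one_smul]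
      rw [e, ip_smul_left, ip_smul_right]
      have ecr : c * r = 2 * (k:ℝ) := by
        rw [hcdef]; field_simp
      have key : (c - 1) * ((c - 1) * ip A A) = (2*(k:ℝ) - r)^2 := by
        rw [← hr2]
        linear_combination (c*r + 2*(k:ℝ) - 2*r) * ecr
      rw [key]
      nlinarith [hrlow, hrhigh]
  intro A
  rcases Nat.eq_zero_or_pos (Nat.ceil (ip A A)) with h | h
  · apply claim 0
    have := Nat.le_ceil (ip A A)
    rw [h] at this
    push_cast at this ⊢
    nlinarith
  · apply claim (Nat.ceil (ip A A))
    have h1 := Nat.le_ceil (ip A A)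
    have h2 : (1:ℝ) ≤ (Nat.ceil (ip A A) : ℝ) := by exact_mod_cast h
    nlinarith


lemma scaled_perp (w v0 : Fin n → ℝ) (hv0 : v0 ≠ 0) (hperp : ip v0 w = 0) :
    ∃ v : Fin n → ℝ, ip v w = 0 ∧ ip v v = 1 + ip w w ∧ ∃ t : ℝ, 0 < t ∧ v = t • v0 := by
  have hv0pos : 0 < ip v0 v0 := ip_self_pos hv0
  have hwpos : (0:ℝ) < 1 + ip w w := by nlinarith [ip_self_nonneg w]
  set t : ℝ := Real.sqrt ((1 + ip w w) / ip v0 v0) with htdef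
  have ht : 0 < t := by rw [htdef]; positivity
  have ht2 : t ^ 2 = (1 + ip w w) / ip v0 v0 := by
    rw [htdef, Real.sq_sqrt (by positivity)]
  refine ⟨t • v0, ?_, ?_, t, ht, rfl⟩
  · rw [ip_smul_left, hperp, mul_zero]
  · rw [ip_smul_left, ip_smul_right, ← mul_assoc, ← pow_two, ht2]
    field_simp

lemma exists_v (hn : 2 ≤ n) (D : Fin n → ℝ) (hD : D ≠ 0) :
    ∃ v : Fin n → ℝ, ip v ((1:Fin n → ℝ) - D) = 0 ∧
      ip v v = 1 + ip ((1:Fin n → ℝ) - D) ((1:Fin n → ℝ) - D) ∧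
      (ip (1:Fin n → ℝ) D ≠ 0 ∨ ip v D ≠ 0) := by
  set w : Fin n → ℝ := (1:Fin n → ℝ) - D with hw
  by_cases h1D : ip (1:Fin n → ℝ) D = 0
  · -- need v with ip v D ≠ 0
    have hwne : w ≠ 0 := by
      intro h
      rw [hw] at h
      have hD1 : D = 1 := by
        have := sub_eq_zero.1 h
        rw [this]
      rw [hD1, ip_one_one] at h1D
      have : (n:ℝ) ≠ 0 := by positivity
      exact this h1D
    have hwpos : 0 < ip w w := ip_self_pos hwne
    set c : ℝ := ip D w / ip w w with hc
    set v0 : Fin n → ℝ := D - c • w with hv0def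
    have hv0perp : ip v0 w = 0 := by
      rw [hv0def, ip_sub_left, ip_smul_left, hc]
      field_simp
      ring
    have hv0ne : v0 ≠ 0 := by
      intro h
      rw [hv0def] at h
      have hDcw : D = c • w := sub_eq_zero.1 h
      have h1w : ip (1:Fin n → ℝ) w = (n:ℝ) := by
        rw [hw, ip_sub_right, ip_one_one, h1D, sub_zero]
      have : ip (1:Fin n → ℝ) D = c * (n:ℝ) := by
        rw [hDcw, ip_smul_right, h1w]
      rw [h1D] at this
      have hc0 : c = 0 := by
        rcases mul_eq_zero.1 this.symm with h' | h'
        · exact h'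
        · exfalso
          have : (0:ℝ) < n := by positivity
          rw [h'] at this
          exact lt_irrefl 0 this
      rw [hc0, zero_smul] at hDcw
      exact hD hDcw
    have hv0D : ip v0 D = ip v0 v0 := by
      have hDe : D = v0 + c • w := by rw [hv0def]; abel
      conv_lhs => rw [hDe]
      rw [ip_add_right, ip_smul_right, hv0perp]
      ring
    obtain ⟨v, hvw, hvv, t, ht, hvt⟩ := scaled_perp w v0 hv0ne hv0perp
    refine ⟨v, hvw, hvv, Or.inr ?_⟩
    rw [hvt, ip_smul_left, hv0D]
    have := ip_self_pos hv0ne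
    positivity
  · -- first disjunct holds; just need any v of the right norm perp to w
    by_cases hwz : w = 0
    · refine ⟨Pi.single ⟨0, by omega⟩ 1, ?_, ?_, Or.inl h1D⟩
      · rw [hwz, ip_zero_right]
      · rw [hwz, ip_zero_left, ip_single]
        simp
    · obtain ⟨v0, hv0ne, hv0perp⟩ := exists_perp hn w
      obtain ⟨v, hvw, hvv, -⟩ := scaled_perp w v0 hv0ne hv0perp
      exact ⟨v, hvw, hvv, Or.inl h1D⟩

lemma reach (hn : 2 ≤ n) (f : (Fin n → ℂ) → (Fin n → ℂ))
    (hf : ∀ X Y : Fin n → ℂ, phi n X Y = 1 ^ 2 → phi n (f X) (f Y) = 1 ^ 2)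
    (hreal : ∀ X : Fin n → ℂ, (∀ i, (X i).im = 0) → f X = X)
    (hone : ∀ A : Fin n → ℝ, f (mk A 1) = mk A 1)
    (X : Fin n → ℂ) (hX : imV X ≠ 0) : f X = X := by
  obtain ⟨v, hv1, hv2, hv3⟩ := exists_v hn (imV X) hX
  apply propagate hn f hf hreal (mk (reV X + v) 1) X (hone _)
  · rw [phi_eq_one_iff, reV_mk, imV_mk]
    have e1 : reV X + v - reV X = v := by abel
    rw [e1]
    constructor
    · rw [hv2]; ring
    · exact hv1
  · intro h
    rw [phi_eq_one_iff, reV_mk, imV_mk, reV_conj, imV_conj] at h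
    obtain ⟨hre, him⟩ := h
    have e1 : reV X + v - reV X = v := by abel
    rw [e1] at hre him
    have eplus : (1:Fin n → ℝ) - -imV X = (1:Fin n → ℝ) - imV X + (2:ℝ) • imV X := by
      funext i
      simp only [Pi.sub_apply, Pi.add_apply, Pi.neg_apply, Pi.smul_apply, smul_eq_mul]
      ring
    rw [eplus] at hre him
    rcases hv3 with hd | hd
    · -- real parts disagree
      apply hd
      simp only [ip_add_left, ip_add_right, ip_sub_left, ip_sub_right, ip_smul_left,
        ip_smul_right] at hre hv2
      simp only [ip_comm (imV X) (1:Fin n → ℝ)] at hre hv2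
      linarith
    · -- imaginary parts disagree
      apply hd
      simp only [ip_add_right, ip_sub_right, ip_smul_right] at him hv1
      linarith

lemma iota_eq : (fun _ => Complex.I : Fin n → ℂ) = mk 0 1 := by
  funext i
  apply Complex.ext <;> simp [mk]

lemma main_lemma (hn : 2 ≤ n) (f : (Fin n → ℂ) → (Fin n → ℂ))
    (hf : ∀ X Y : Fin n → ℂ, phi n X Y = 1 ^ 2 → phi n (f X) (f Y) = 1 ^ 2)
    (hreal : ∀ X : Fin n → ℂ, (∀ i, (X i).im = 0) → f X = X)
    (hι : f (fun _ => Complex.I) = fun _ => Complex.I)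
    (X : Fin n → ℂ) (hX : ¬ ∀ i, (X i).im = 0) : f X = X := by
  have hX' : imV X ≠ 0 := (imV_ne_zero_iff X).2 hX
  have h0 : f (mk (0 : Fin n → ℝ) 1) = mk 0 1 := by
    rw [← iota_eq]; exact hι
  exact reach hn f hf hreal (all_one_fixed hn f hf hreal h0) X hX'

end S7

/-- If n ≥ 2, f : ℂⁿ → ℂⁿ preserves unit distance and is the identity on ℝⁿ,
then for each X ∈ ℂⁿ \ ℝⁿ: f((i,...,i)) = (i,...,i) implies f(X) = X, and
f((i,...,i)) = (−i,...,−i) implies f(X) = (τ,...,τ)(X). -/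
theorem stmt_7 (n : ℕ) (hn : 2 ≤ n) (f : (Fin n → ℂ) → (Fin n → ℂ))
    (hf : ∀ X Y : Fin n → ℂ, phi n X Y = 1 ^ 2 → phi n (f X) (f Y) = 1 ^ 2)
    (hreal : ∀ X : Fin n → ℂ, (∀ i, (X i).im = 0) → f X = X)
    (X : Fin n → ℂ) (hX : ¬ ∀ i, (X i).im = 0) :
    ((f (fun _ => Complex.I) = fun _ => Complex.I) → f X = X) ∧
    ((f (fun _ => Complex.I) = fun _ => -Complex.I) →
      f X = fun i => (starRingEnd ℂ) (X i)) := by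
  constructor
  · intro hι
    exact S7.main_lemma hn f hf hreal hι X hX
  · intro hι
    set g : (Fin n → ℂ) → (Fin n → ℂ) := fun U => fun i => (starRingEnd ℂ) (f U i) with hg
    have hfg : ∀ U V : Fin n → ℂ, phi n U V = 1 ^ 2 → phi n (g U) (g V) = 1 ^ 2 := by
      intro U V h
      have h2 := hf U V h
      have h3 : phi n (g U) (g V) = (starRingEnd ℂ) (phi n (f U) (f V)) := S7.phi_conj _ _
      rw [h3, h2]
      simp
    have hrealg : ∀ U : Fin n → ℂ, (∀ i, (U i).im = 0) → g U = U := by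
      intro U hU
      funext i
      show (starRingEnd ℂ) (f U i) = U i
      rw [hreal U hU]
      exact Complex.conj_eq_iff_im.2 (hU i)
    have hιg : g (fun _ => Complex.I) = fun _ => Complex.I := by
      funext i
      show (starRingEnd ℂ) (f (fun _ => Complex.I) i) = Complex.I
      rw [hι]
      simp
    have hmain := S7.main_lemma hn g hfg hrealg hιg X hX
    funext i
    have h := congrFun hmain i
    calc f X i = (starRingEnd ℂ) ((starRingEnd ℂ) (f X i)) := (Complex.conj_conj _).symm
      _ = (starRingEnd ℂ) (X i) := by exact congrArg _ h
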